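/- In a finitely complete category with binary coproducts in which binary coproducts of pullback squares are pullback squares, binary coproducts of feeble pullback squares are feeble pullback squares (assuming regular epimorphisms are closed under binary coproduct, which holds since coproducts of regular epimorphisms are regular epimorphisms). -/

import Mathlib

open CategoryTheory Limits

/-- A commutative square (top `fst`, left `snd`, right `f`, bottom `g`) is a feeble
pullback if the canonical comparison morphism into the pullback is a regular
epimorphism. -/
def IsFeeblePullback {C : Type*} [CategoryTheory.Category C] {P X Y Z : C}
    (fst : P ⟶ X) (snd : P ⟶ Y) (f : X ⟶ Z) (g : Y ⟶ Z)
    [CategoryTheory.Limits.HasPullback f g] : Prop :=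
  ∃ w : fst ≫ f = snd ≫ g,
    Nonempty (CategoryTheory.RegularEpi (CategoryTheory.Limits.pullback.lift fst snd w))

/-- Regular epimorphisms are stable under pullback. -/
def RegularEpisPullbackStable (C : Type*) [CategoryTheory.Category C]
    [CategoryTheory.Limits.HasPullbacks C] : Prop :=
  ∀ {X Y Z : C} (f : X ⟶ Z) (g : Y ⟶ Z), CategoryTheory.RegularEpi g →
    Nonempty (CategoryTheory.RegularEpi (CategoryTheory.Limits.pullback.fst f g))

/-- Kernel pairs admit coequalizers. -/
def HasKernelPairCoequalizers (C : Type*) [CategoryTheory.Category C]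
    [CategoryTheory.Limits.HasPullbacks C] : Prop :=
  ∀ {X Y : C} (f : X ⟶ Y),
    CategoryTheory.Limits.HasCoequalizer (CategoryTheory.Limits.pullback.fst f f)
      (CategoryTheory.Limits.pullback.snd f f)

/-- Binary coproducts of pullback squares are pullback squares. -/
def CoprodOfPullbacksIsPullback (C : Type*) [CategoryTheory.Category C]
    [HasBinaryCoproducts C] : Prop :=
  ∀ {P X Y Z P' X' Y' Z' : C}
    (fst : P ⟶ X) (snd : P ⟶ Y) (f : X ⟶ Z) (g : Y ⟶ Z)
    (fst' : P' ⟶ X') (snd' : P' ⟶ Y') (f' : X' ⟶ Z') (g' : Y' ⟶ Z'),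
    IsPullback fst snd f g → IsPullback fst' snd' f' g' →
      IsPullback (coprod.map fst fst') (coprod.map snd snd')
        (coprod.map f f') (coprod.map g g')

/-- A regular epimorphism followed by an isomorphism is a regular epimorphism. -/
noncomputable def regularEpiCompIsoAux {C : Type*} [Category C] {A B D : C} (q : A ⟶ B)
    (h : RegularEpi q) (i : B ⟶ D) [IsIso i] : RegularEpi (q ≫ i) where
  W := h.W
  left := h.left
  right := h.right
  w := by rw [← Category.assoc, ← Category.assoc, h.w]
  isColimit := by
    refine Cofork.IsColimit.mk _
      (fun s => inv i ≫ Cofork.IsColimit.desc h.isColimit s.π s.condition)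
      (fun s => by
        rw [Cofork.π_ofπ, Category.assoc, IsIso.hom_inv_id_assoc]
        exact Cofork.IsColimit.π_desc' h.isColimit s.π s.condition)
      (fun s m hm => ?_)
    have : Epi q := RegularEpi.epi q h
    have : Epi (q ≫ i) := epi_comp q i
    rw [← cancel_epi (q ≫ i)]
    rw [Cofork.π_ofπ] at hm
    rw [hm]
    simp only [Category.assoc, IsIso.hom_inv_id_assoc]
    exact (Cofork.IsColimit.π_desc' h.isColimit s.π s.condition).symm


/-- In a finitely complete category with binary coproducts in which binary coproducts of
pullback squares are pullback squares and regular epimorphisms are closed under binary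
coproduct, binary coproducts of feeble pullback squares are feeble pullback squares. -/

theorem coprod_of_feeble_pullbacks {C : Type*} [Category C]
    [HasFiniteLimits C] [HasBinaryCoproducts C]
    (hco : CoprodOfPullbacksIsPullback C)
    (hre : ∀ {X Y X' Y' : C} (p : X ⟶ Y) (p' : X' ⟶ Y'), RegularEpi p → RegularEpi p' →
      Nonempty (RegularEpi (coprod.map p p')))
    {P X Y Z P' X' Y' Z' : C}
    (fst : P ⟶ X) (snd : P ⟶ Y) (f : X ⟶ Z) (g : Y ⟶ Z)
    (fst' : P' ⟶ X') (snd' : P' ⟶ Y') (f' : X' ⟶ Z') (g' : Y' ⟶ Z')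
    (h : IsFeeblePullback fst snd f g) (h' : IsFeeblePullback fst' snd' f' g') :
    IsFeeblePullback (coprod.map fst fst') (coprod.map snd snd')
      (coprod.map f f') (coprod.map g g') := by
  obtain ⟨w, ⟨hk⟩⟩ := h
  obtain ⟨w', ⟨hk'⟩⟩ := h'
  have hp := hco (pullback.fst f g) (pullback.snd f g) f g
    (pullback.fst f' g') (pullback.snd f' g') f' g'
    (IsPullback.of_hasPullback f g) (IsPullback.of_hasPullback f' g')
  have w2 : coprod.map fst fst' ≫ coprod.map f f' =
      coprod.map snd snd' ≫ coprod.map g g' := by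
    rw [coprod.map_map, coprod.map_map, w, w']
  refine ⟨w2, ?_⟩
  obtain ⟨hcc⟩ := hre _ _ hk hk'
  set i := hp.isoPullback with hi
  have key : pullback.lift (coprod.map fst fst') (coprod.map snd snd') w2 =
      coprod.map (pullback.lift fst snd w) (pullback.lift fst' snd' w') ≫ i.hom := by
    apply pullback.hom_ext
    · rw [Category.assoc, hp.isoPullback_hom_fst, pullback.lift_fst, coprod.map_map]
      rw [pullback.lift_fst, pullback.lift_fst]
    · rw [Category.assoc, hp.isoPullback_hom_snd, pullback.lift_snd, coprod.map_map]
      rw [pullback.lift_snd, pullback.lift_snd]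
  rw [key]
  exact ⟨regularEpiCompIsoAux _ hcc i.hom⟩
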